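/- arXiv:1206.4731 — 2 statements merged into one kernel-verified Lean document; each statement's English description precedes it below -/
import Mathlib

section
/- Let (X, Y) be a 3-separation of a 3-connected binary matroid with |X| = 4. Then X is a quad or a 4-fan. -/
open scoped Matroid

universe u v

namespace Matroid

variable {α : Type u} {β : Type v}

/-- Deletion of a set of elements from a matroid. -/
def Del (M : Matroid α) (D : Set α) : Matroid α := M ↾ (M.E \ D)

/-- Contraction of a set of elements in a matroid. -/
def Con (M : Matroid α) (C : Set α) : Matroid α := (M✶.Del C)✶

/-- A circuit is a minimal dependent set. -/
def IsCircuit' (M : Matroid α) (C : Set α) : Prop :=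
  M.Dep C ∧ ∀ ⦃D : Set α⦄, D ⊂ C → M.Indep D

/-- A cocircuit is a circuit of the dual matroid. -/
def IsCocircuit' (M : Matroid α) (C : Set α) : Prop := M✶.IsCircuit' C

/-- A triangle is a 3-element circuit. -/
def IsTriangle (M : Matroid α) (T : Set α) : Prop := M.IsCircuit' T ∧ T.encard = 3

/-- A triad is a 3-element cocircuit. -/
def IsTriad (M : Matroid α) (T : Set α) : Prop := M.IsCocircuit' T ∧ T.encard = 3

/-- A quad is a 4-element set that is both a circuit and a cocircuit. -/
def IsQuad (M : Matroid α) (Q : Set α) : Prop :=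
  M.IsCircuit' Q ∧ M.IsCocircuit' Q ∧ Q.encard = 4

/-- The rank (in `ℕ∞`) of a set in a matroid: the supremum of the cardinalities
of independent subsets of the set. -/
noncomputable def eRk' (M : Matroid α) (X : Set α) : ℕ∞ :=
  ⨆ I ∈ {I : Set α | M.Indep I ∧ I ⊆ X}, I.encard

/-- `M.ConnBddBy X k` says that the connectivity `λ_M(X) = r(X) + r(E − X) − r(M)`
is at most `k`, phrased without subtraction. -/
def ConnBddBy (M : Matroid α) (X : Set α) (k : ℕ) : Prop :=
  M.eRk' X + M.eRk' (M.E \ X) ≤ M.eRk' M.E + (k : ℕ∞)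

/-- `(X, Y)` is a `k`-separation of `M`: a partition of the ground set with both
sides of size at least `k` and `λ_M(X) ≤ k − 1`. -/
def IsKSep (M : Matroid α) (k : ℕ) (X Y : Set α) : Prop :=
  Disjoint X Y ∧ X ∪ Y = M.E ∧ (k : ℕ∞) ≤ X.encard ∧ (k : ℕ∞) ≤ Y.encard ∧
    M.ConnBddBy X (k - 1)

/-- A matroid is `n`-connected if it has no `k`-separation for any `k < n`. -/
def NConnected (M : Matroid α) (n : ℕ) : Prop :=
  ∀ k : ℕ, 0 < k → k < n → ∀ X Y : Set α, ¬ M.IsKSep k X Y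

/-- A matroid is 3-connected if it has no 1- or 2-separation. -/
def ThreeConnected (M : Matroid α) : Prop := M.NConnected 3

/-- A matroid is 4-connected if it has no 1-, 2- or 3-separation. -/
def FourConnected (M : Matroid α) : Prop := M.NConnected 4

/-- A matroid is `(4, k)`-connected if it is 3-connected and every 3-separation
has a side with at most `k` elements. -/
def FourKConnected (M : Matroid α) (k : ℕ) : Prop :=
  M.ThreeConnected ∧ ∀ X Y : Set α, M.IsKSep 3 X Y →
    X.encard ≤ (k : ℕ∞) ∨ Y.encard ≤ (k : ℕ∞)

/-- A matroid is internally 4-connected if it is (4, 3)-connected. -/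
def InternallyFourConnected (M : Matroid α) : Prop := M.FourKConnected 3

/-- A `(4, 3)`-violator is a 3-separation with both sides of size at least 4. -/
def Violator43 (M : Matroid α) (X Y : Set α) : Prop :=
  M.IsKSep 3 X Y ∧ (4 : ℕ∞) ≤ X.encard ∧ (4 : ℕ∞) ≤ Y.encard

/-- Two matroids are isomorphic if there is a bijection between their ground sets
carrying independent sets to independent sets in both directions. -/
def IsIsoTo (M : Matroid α) (N : Matroid β) : Prop :=
  ∃ e : M.E ≃ N.E, ∀ I : Set M.E,
    M.Indep (Subtype.val '' I) ↔ N.Indep (Subtype.val '' (e '' I))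

/-- `N` is a minor of `M` if it is obtained from `M` by contracting a set and
deleting a disjoint set. -/
def IsMinorOf (N M : Matroid α) : Prop :=
  ∃ C D : Set α, Disjoint C D ∧ C ⊆ M.E ∧ D ⊆ M.E ∧ N = (M.Con C).Del D

/-- `M` has an `N`-minor: a minor of `M` isomorphic to `N`. -/
def HasIsoMinor (M : Matroid α) (N : Matroid β) : Prop :=
  ∃ M₀ : Matroid α, M₀.IsMinorOf M ∧ M₀.IsIsoTo N

/-- `M` has a proper `N`-minor: a proper minor of `M` isomorphic to `N`. -/
def HasProperIsoMinor (M : Matroid α) (N : Matroid β) : Prop :=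
  ∃ M₀ : Matroid α, M₀.IsMinorOf M ∧ M₀ ≠ M ∧ M₀.IsIsoTo N

/-- A matroid is binary if it is representable over `GF(2)`. -/
def IsBinary (M : Matroid α) : Prop :=
  ∃ (ι : Type u) (v : α → ι → ZMod 2), ∀ I : Set α,
    M.Indep I ↔ I ⊆ M.E ∧ LinearIndependent (ZMod 2) (fun x : I => v x)

/-- A 4-fan: an ordering `(a, b, c, d)` of a 4-element set with `{a,b,c}` a
triangle and `{b,c,d}` a triad. -/
def Is4FanOrdering (M : Matroid α) (a b c d : α) : Prop :=
  ({a, b, c, d} : Set α).encard = 4 ∧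
    M.IsTriangle {a, b, c} ∧ M.IsTriad {b, c, d}

/-- A 5-fan: an ordering of a 5-element set whose alternating sequence contains
two triangles. -/
def Is5FanOrdering (M : Matroid α) (a b c d e : α) : Prop :=
  ({a, b, c, d, e} : Set α).encard = 5 ∧
    M.IsTriangle {a, b, c} ∧ M.IsTriad {b, c, d} ∧ M.IsTriangle {c, d, e}

/-- A 5-cofan: an ordering of a 5-element set whose alternating sequence contains
two triads. -/
def Is5CofanOrdering (M : Matroid α) (a b c d e : α) : Prop :=
  ({a, b, c, d, e} : Set α).encard = 5 ∧
    M.IsTriad {a, b, c} ∧ M.IsTriangle {b, c, d} ∧ M.IsTriad {c, d, e}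

/-- A fan ordering `(s 0, …, s (n-1))`: the consecutive triples form an
alternating sequence of triangles and triads. -/
def IsFanOrdering (M : Matroid α) (n : ℕ) (s : ℕ → α) : Prop :=
  3 ≤ n ∧ Set.InjOn s (Set.Iio n) ∧
    ((∀ i : ℕ, i + 3 ≤ n →
        (Even i → M.IsTriangle {s i, s (i + 1), s (i + 2)}) ∧
        (¬ Even i → M.IsTriad {s i, s (i + 1), s (i + 2)})) ∨
     (∀ i : ℕ, i + 3 ≤ n →
        (Even i → M.IsTriad {s i, s (i + 1), s (i + 2)}) ∧
        (¬ Even i → M.IsTriangle {s i, s (i + 1), s (i + 2)})))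

/-- The counterexample hypotheses on a pair `(M, N)`. -/
def CexHyp (M : Matroid α) (N : Matroid β) : Prop :=
  M.IsBinary ∧ N.IsBinary ∧
  M.InternallyFourConnected ∧ N.InternallyFourConnected ∧
  M.HasProperIsoMinor N ∧
  (8 : ℕ∞) ≤ N.E.encard ∧ (11 : ℕ∞) ≤ M.E.encard ∧
  (∀ T : Set α, M.IsTriangle T → ∀ e ∈ T, ¬ (M.Del {e}).HasIsoMinor N) ∧
  (∀ T : Set α, M.IsTriad T → ∀ e ∈ T, ¬ (M.Con {e}).HasIsoMinor N) ∧
  ¬ ∃ M' : Matroid α, M'.IsMinorOf M ∧ M'.InternallyFourConnected ∧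
      M'.HasIsoMinor N ∧
      M'.E.encard + 1 ≤ M.E.encard ∧ M.E.encard ≤ M'.E.encard + 2

end Matroid

open Matroid

namespace Matroid
variable {α : Type u} {M : Matroid α} {I J B C X Z : Set α} {a : α}

lemma le_eRk'_of (hI : M.Indep I) (hIX : I ⊆ X) : I.encard ≤ M.eRk' X :=
  le_iSup₂_of_le I ⟨hI, hIX⟩ le_rfl

lemma eRk'_le_iff {c : ℕ∞} : M.eRk' X ≤ c ↔ ∀ I, M.Indep I → I ⊆ X → I.encard ≤ c := by
  simp [eRk', iSup₂_le_iff, and_imp]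

lemma IsBasis'.eRk'_eq (hI : M.IsBasis' I X) : M.eRk' X = I.encard := by
  refine le_antisymm (eRk'_le_iff.2 fun J hJ hJX => ?_) (le_eRk'_of hI.indep hI.subset)
  obtain ⟨J', hJ', hJJ'⟩ := hJ.subset_isBasis'_of_subset hJX
  exact (Set.encard_mono hJJ').trans (hJ'.encard_eq_encard hI).le

lemma eRk'_mono (h : X ⊆ Z) : M.eRk' X ≤ M.eRk' Z :=
  eRk'_le_iff.2 fun I hI hIX => le_eRk'_of hI (hIX.trans h)

lemma eRk'_le_encard (M : Matroid α) (X : Set α) : M.eRk' X ≤ X.encard :=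
  eRk'_le_iff.2 fun _ _ h => Set.encard_mono h

lemma Indep.eRk'_self (hI : M.Indep I) : M.eRk' I = I.encard :=
  (hI.isBasis_self.isBasis').eRk'_eq

lemma eRk'_ground_eq (hB : M.IsBase B) : M.eRk' M.E = B.encard :=
  IsBasis'.eRk'_eq (by rw [isBasis'_iff_isBasis]; exact hB.isBasis_ground)

lemma eRk'_insert_le (M : Matroid α) (a : α) (X : Set α) :
    M.eRk' (insert a X) ≤ M.eRk' X + 1 := by
  refine eRk'_le_iff.2 fun I hI hIX => ?_
  have h1 : I \ {a} ⊆ X := fun x hx =>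
    ((hIX hx.1).resolve_left (by simpa using hx.2))
  by_cases ha : a ∈ I
  · rw [← Set.encard_diff_singleton_add_one ha]
    exact add_le_add_left (le_eRk'_of (hI.subset Set.diff_subset) h1) 1
  · have : I ⊆ X := by rwa [Set.diff_singleton_eq_self ha] at h1
    exact (le_eRk'_of hI this).trans le_self_add

/-- A full-rank independent subset is a base. -/
lemma base_of_full_basis' (hI : M.IsBasis' I X)
    (hfull : M.eRk' X = M.eRk' M.E) (hfin : M.eRk' M.E ≠ ⊤) : M.IsBase I := by
  obtain ⟨B, hB, hIB⟩ := hI.indep.exists_isBase_superset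
  have hBe : M.eRk' M.E = B.encard := eRk'_ground_eq hB
  have hIe : I.encard = B.encard := by rw [← hI.eRk'_eq, hfull, hBe]
  have hBfin : B.Finite := Set.encard_ne_top_iff.1 (hBe ▸ hfin)
  rwa [(hBfin.subset hIB).eq_of_subset_of_encard_le hIB hIe.ge]

/-- Dep sets contain circuits (finite case). -/
lemma exists_circuit_of_dep_aux : ∀ n (X : Set α), X.Finite → X.ncard ≤ n → M.Dep X →
    ∃ C, C ⊆ X ∧ M.IsCircuit' C := by
  intro n
  induction n with
  | zero =>
    intro X hfin hn hX
    rw [Nat.le_zero, Set.ncard_eq_zero hfin] at hn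
    exact absurd (hn ▸ M.empty_indep) hX.not_indep
  | succ n ih =>
    intro X hfin _hn hX
    by_cases h : ∀ D, D ⊂ X → M.Indep D
    · exact ⟨X, subset_rfl, hX, h⟩
    push_neg at h
    obtain ⟨D, hDX, hD⟩ := h
    obtain ⟨C, hCD, hC⟩ := ih D (hfin.subset hDX.subset)
      (by have := Set.ncard_lt_ncard hDX hfin; omega)
      ⟨hD, hDX.subset.trans hX.subset_ground⟩
    exact ⟨C, hCD.trans hDX.subset, hC⟩

lemma exists_circuit_of_dep (hfin : X.Finite) (hX : M.Dep X) :
    ∃ C, C ⊆ X ∧ M.IsCircuit' C :=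
  exists_circuit_of_dep_aux X.ncard X hfin le_rfl hX

end Matroid

namespace Matroid
open Set Submodule Finsupp
variable {α : Type u} {ι : Type u} {M : Matroid α} {I J B C K X Z : Set α} {a : α}
  {v : α → ι → ZMod 2}

lemma dual_dep_of_compl_not_full (hS : Z ⊆ M.E) (hne : M.eRk' (M.E \ Z) ≠ M.eRk' M.E)
    (hfin : M.eRk' M.E ≠ ⊤) : M✶.Dep Z := by
  rw [dep_iff, dual_indep_iff_exists', dual_ground]
  refine ⟨fun h => hne ?_, hS⟩
  obtain ⟨-, B, hB, hdis⟩ := h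
  refine le_antisymm (eRk'_mono diff_subset) ?_
  rw [eRk'_ground_eq hB]
  exact le_eRk'_of hB.indep (subset_diff.2 ⟨hB.subset_ground, hdis.symm⟩)

lemma compl_not_full_of_dual_dep (hdep : M✶.Dep Z) (hfin : M.eRk' M.E ≠ ⊤) :
    M.eRk' (M.E \ Z) ≠ M.eRk' M.E := by
  intro h
  obtain ⟨I, hI⟩ := M.exists_isBasis' (M.E \ Z)
  have hB : M.IsBase I := base_of_full_basis' hI h hfin
  refine hdep.not_indep (dual_indep_iff_exists'.2 ⟨by simpa using hdep.subset_ground, I, hB, ?_⟩)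
  exact (subset_diff.1 hI.subset).2.symm

/-- For a cocircuit `K` and `e ∈ K`, the set `(M.E \ K) ∪ {e}` is spanning. -/
lemma cocircuit_insert_full (hK : M✶.IsCircuit' K) (he : a ∈ K)
    (hfin : M.eRk' M.E ≠ ⊤) : M.eRk' (insert a (M.E \ K)) = M.eRk' M.E := by
  have hKE : K ⊆ M.E := by have := hK.1.subset_ground; rwa [dual_ground] at this
  have hind : M✶.Indep (K \ {a}) := hK.2 (sdiff_singleton_ssubset.2 he)
  obtain ⟨-, B, hB, hdis⟩ := dual_indep_iff_exists'.1 hind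
  have hBsub : B ⊆ insert a (M.E \ K) := by
    intro x hx
    by_cases hxK : x ∈ K
    · have : x ∉ K \ {a} := fun h => (hdis.ne_of_mem h hx) rfl
      simp only [mem_diff, hxK, true_and, not_not] at this
      exact this ▸ mem_insert _ _
    · exact mem_insert_of_mem _ ⟨hB.subset_ground hx, hxK⟩
  refine le_antisymm (eRk'_mono (insert_subset (hKE he) diff_subset)) ?_
  rw [eRk'_ground_eq hB]
  exact le_eRk'_of hB.indep hBsub

end Matroid

namespace Matroid
open Set Submodule Finsupp
variable {α : Type u} {ι : Type u} {M : Matroid α} {I J B C K X Z : Set α} {a b : α}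
  {v : α → ι → ZMod 2}

lemma zmod2_cases (x : ZMod 2) : x = 0 ∨ x = 1 := by revert x; decide

lemma zmod2_add_self (x : ι → ZMod 2) : x + x = 0 := by
  rw [← two_smul (ZMod 2), show (2 : ZMod 2) = 0 by decide, zero_smul]

lemma indep_iff_finsupp (hv : ∀ I, M.Indep I ↔ I ⊆ M.E ∧
      LinearIndependent (ZMod 2) fun x : I => v x) (hC : C ⊆ M.E) :
    M.Indep C ↔ ∀ l ∈ Finsupp.supported (ZMod 2) (ZMod 2) C,
      Finsupp.linearCombination (ZMod 2) v l = 0 → l = 0 := by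
  rw [hv C, and_iff_right hC]
  exact linearIndepOn_iff

lemma indep_insert_iff (hv : ∀ I, M.Indep I ↔ I ⊆ M.E ∧
      LinearIndependent (ZMod 2) fun x : I => v x)
    (hI : M.Indep I) (haE : a ∈ M.E) (haI : a ∉ I) :
    M.Indep (insert a I) ↔ v a ∉ span (ZMod 2) (v '' I) := by
  classical
  constructor
  · intro hins hmem
    obtain ⟨l, hl, hl0⟩ := (Finsupp.mem_span_image_iff_linearCombination _).1 hmem
    have h2 : Finsupp.linearCombination (ZMod 2) v (l + Finsupp.single a 1) = 0 := by
      rw [map_add, hl0, Finsupp.linearCombination_single, one_smul, zmod2_add_self]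
    have hsupp : l + Finsupp.single a 1 ∈ Finsupp.supported (ZMod 2) (ZMod 2) (insert a I) := by
      refine (Finsupp.mem_supported _ _).2 ((Finset.coe_subset.2 Finsupp.support_add).trans ?_)
      rw [Finset.coe_union]
      refine union_subset (((Finsupp.mem_supported _ _).1 hl).trans (subset_insert _ _)) ?_
      refine (Finset.coe_subset.2 Finsupp.support_single_subset).trans (by simp)
    have h3 := (indep_iff_finsupp hv (insert_subset haE hI.subset_ground)).1 hins _ hsupp h2
    have h4 := DFunLike.congr_fun h3 a
    have h5 : l a = 0 := by
      have := (Finsupp.mem_supported _ _).1 hl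
      exact Finsupp.notMem_support_iff.1 fun hs => haI (this hs)
    rw [Finsupp.add_apply, h5, Finsupp.single_eq_same, zero_add] at h4
    simpa using h4
  · intro hspan
    rw [indep_iff_finsupp hv (insert_subset haE hI.subset_ground)]
    intro l hl h0
    by_cases hla : l a = 0
    · have hl' : l ∈ Finsupp.supported (ZMod 2) (ZMod 2) I := by
        refine (Finsupp.mem_supported _ _).2 fun x hx => ?_
        rcases ((Finsupp.mem_supported _ _).1 hl) hx with rfl | h
        · exact absurd hla (Finsupp.mem_support_iff.1 hx)
        · exact h
      exact (indep_iff_finsupp hv hI.subset_ground).1 hI l hl' h0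
    · exfalso
      apply hspan
      have h1 : l a = 1 := (zmod2_cases _).resolve_left hla
      have herase : l.erase a ∈ Finsupp.supported (ZMod 2) (ZMod 2) I := by
        refine (Finsupp.mem_supported _ _).2 fun x hx => ?_
        have hxa : x ≠ a := Finset.ne_of_mem_erase hx
        rcases ((Finsupp.mem_supported _ _).1 hl) (Finset.mem_of_mem_erase hx) with rfl | h
        · exact absurd rfl hxa
        · exact h
      have hdecomp : Finsupp.linearCombination (ZMod 2) v l
          = v a + Finsupp.linearCombination (ZMod 2) v (l.erase a) := by
        conv_lhs => rw [← Finsupp.single_add_erase a l]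
        rw [map_add, Finsupp.linearCombination_single, h1, one_smul]
      have hva : v a = Finsupp.linearCombination (ZMod 2) v (l.erase a) := by
        have h6 : v a + (Finsupp.linearCombination (ZMod 2) v (l.erase a)
            + Finsupp.linearCombination (ZMod 2) v (l.erase a)) = 0 + Finsupp.linearCombination (ZMod 2) v (l.erase a) := by
          rw [← add_assoc, ← hdecomp, h0]
        rwa [zmod2_add_self, add_zero, zero_add] at h6
      exact (Finsupp.mem_span_image_iff_linearCombination _).2 ⟨l.erase a, herase, hva.symm⟩

lemma vec_ne_zero (hv : ∀ I, M.Indep I ↔ I ⊆ M.E ∧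
      LinearIndependent (ZMod 2) fun x : I => v x) (h : M.Indep {a}) : v a ≠ 0 := by
  intro h0
  have h1 := (indep_iff_finsupp hv h.subset_ground).1 h (Finsupp.single a 1)
    (by refine (Finsupp.mem_supported _ _).2 ((Finset.coe_subset.2 Finsupp.support_single_subset).trans (by simp)))
    (by rw [Finsupp.linearCombination_single, one_smul, h0])
  simpa using Finsupp.single_eq_zero.1 h1

lemma vec_ne (hv : ∀ I, M.Indep I ↔ I ⊆ M.E ∧
      LinearIndependent (ZMod 2) fun x : I => v x)
    (hab : a ≠ b) (h : M.Indep {a, b}) : v a ≠ v b := by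
  classical
  intro h0
  have h1 := (indep_iff_finsupp hv h.subset_ground).1 h
    (Finsupp.single a 1 + Finsupp.single b 1)
    (by
      refine (Finsupp.mem_supported _ _).2 ((Finset.coe_subset.2 Finsupp.support_add).trans ?_)
      rw [Finset.coe_union]
      refine union_subset ((Finset.coe_subset.2 Finsupp.support_single_subset).trans (by simp))
        ((Finset.coe_subset.2 Finsupp.support_single_subset).trans (by simp)))
    (by rw [map_add, Finsupp.linearCombination_single, Finsupp.linearCombination_single,
        one_smul, one_smul, h0, zmod2_add_self])
  have h2 := DFunLike.congr_fun h1 a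
  rw [Finsupp.add_apply, Finsupp.single_eq_same, Finsupp.single_eq_of_ne' (Ne.symm hab),
    add_zero] at h2
  simpa using h2

lemma circuit_sum (hv : ∀ I, M.Indep I ↔ I ⊆ M.E ∧
      LinearIndependent (ZMod 2) fun x : I => v x)
    (hC : M.IsCircuit' C) (hCfin : C.Finite) :
    ∃ s : Finset α, ↑s = C ∧ ∑ e ∈ s, v e = 0 := by
  classical
  have hCE : C ⊆ M.E := hC.1.subset_ground
  have hdep := hC.1.not_indep
  rw [indep_iff_finsupp hv hCE] at hdep
  push_neg at hdep
  obtain ⟨l, hl, hl0, hlne⟩ := hdep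
  have hsupp : (↑l.support : Set α) ⊆ C := (Finsupp.mem_supported _ _).1 hl
  have hsC : (↑l.support : Set α) = C := by
    by_contra hne
    have hss : (↑l.support : Set α) ⊂ C := hsupp.ssubset_of_ne hne
    have hind := hC.2 hss
    exact hlne ((indep_iff_finsupp hv (hsupp.trans hCE)).1 hind l
      ((Finsupp.mem_supported _ _).2 subset_rfl) hl0)
  refine ⟨l.support, hsC, ?_⟩
  have : ∀ e ∈ l.support, l e = 1 :=
    fun e he => (zmod2_cases _).resolve_left (Finsupp.mem_support_iff.1 he)
  rw [Finsupp.linearCombination_apply, Finsupp.sum] at hl0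
  rw [← hl0]
  exact Finset.sum_congr rfl fun e he => by rw [this e he, one_smul]

lemma image_subset_span_basis' (hv : ∀ I, M.Indep I ↔ I ⊆ M.E ∧
      LinearIndependent (ZMod 2) fun x : I => v x)
    (hI : M.IsBasis' I X) (hX : X ⊆ M.E) :
    v '' X ⊆ ↑(span (ZMod 2) (v '' I)) := by
  rintro _ ⟨x, hx, rfl⟩
  by_cases hxI : x ∈ I
  · exact subset_span (mem_image_of_mem v hxI)
  · by_contra hsp
    exact hI.insert_not_indep ⟨hx, hxI⟩ ((indep_insert_iff hv hI.indep (hX hx) hxI).2 hsp)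

lemma image_ground_subset_span_base (hv : ∀ I, M.Indep I ↔ I ⊆ M.E ∧
      LinearIndependent (ZMod 2) fun x : I => v x) (hB : M.IsBase B) :
    v '' M.E ⊆ ↑(span (ZMod 2) (v '' B)) :=
  image_subset_span_basis' hv hB.isBasis_ground.isBasis' subset_rfl

lemma encard_le_of_subset_span (hv : ∀ I, M.Indep I ↔ I ⊆ M.E ∧
      LinearIndependent (ZMod 2) fun x : I => v x)
    (hJ : M.Indep J) {s : Set (ι → ZMod 2)} (hs : s.Finite)
    (hsub : v '' J ⊆ ↑(span (ZMod 2) s)) : J.encard ≤ s.encard := by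
  classical
  by_contra h
  push_neg at h
  obtain ⟨J₀, hJ₀J, hJ₀⟩ := Set.exists_subset_encard_eq (Order.add_one_le_of_lt h)
  have hsfin : s.encard ≠ ⊤ := Set.encard_ne_top_iff.2 hs
  have hfin : J₀.Finite := Set.encard_ne_top_iff.1 (by
    rw [hJ₀]
    intro ht
    exact hsfin ((WithTop.add_eq_top.1 ht).elim id (fun h => absurd h ENat.one_ne_top)))
  haveI := hfin.fintype
  haveI := hs.fintype
  haveI : FiniteDimensional (ZMod 2) (span (ZMod 2) s) :=
    FiniteDimensional.span_of_finite _ hs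
  have hli : LinearIndependent (ZMod 2) fun x : J₀ => v x :=
    ((hv J₀).1 (hJ.subset hJ₀J)).2
  have hg : LinearIndependent (ZMod 2)
      (fun x : J₀ => (⟨v x, hsub ⟨x, hJ₀J x.2, rfl⟩⟩ : span (ZMod 2) s)) := by
    apply LinearIndependent.of_comp (span (ZMod 2) s).subtype
    exact hli
  have hcard := hg.fintype_card_le_finrank
  have h2 := finrank_span_le_card (R := ZMod 2) s
  have h3 : J₀.encard = (Fintype.card J₀ : ℕ∞) := by
    rw [Set.encard_eq_coe_toFinset_card, Set.toFinset_card]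
  have h4 : s.encard = (s.toFinset.card : ℕ∞) := Set.encard_eq_coe_toFinset_card s
  rw [h3, h4] at hJ₀
  have h5 : Fintype.card J₀ = s.toFinset.card + 1 := by exact_mod_cast hJ₀
  omega

lemma zmod2_pigeon {V : Type v} [AddCommGroup V] [Module (ZMod 2) V] {u1 u2 u3 u4 : V}
    (h30 : u3 ≠ 0) (h40 : u4 ≠ 0) (h31 : u3 ≠ u1) (h32 : u3 ≠ u2) (h41 : u4 ≠ u1)
    (h42 : u4 ≠ u2) (h34 : u3 ≠ u4)
    (e3 : ∃ a b : ZMod 2, a • u1 + b • u2 = u3)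
    (e4 : ∃ a b : ZMod 2, a • u1 + b • u2 = u4) : False := by
  obtain ⟨a, b, h3⟩ := e3; obtain ⟨c, d, h4⟩ := e4
  rcases zmod2_cases a with rfl|rfl <;> rcases zmod2_cases b with rfl|rfl <;>
    rcases zmod2_cases c with rfl|rfl <;> rcases zmod2_cases d with rfl|rfl <;>
    simp_all

end Matroid

namespace Matroid
open Set Submodule Finsupp
variable {α : Type u} {ι : Type u} {M : Matroid α} {I J B C K X Z : Set α} {a b : α}
  {v : α → ι → ZMod 2}

lemma even_circuit_cocircuit (hv : ∀ I, M.Indep I ↔ I ⊆ M.E ∧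
      LinearIndependent (ZMod 2) fun x : I => v x)
    (hC : M.IsCircuit' C) (hCfin : C.Finite) (hK : M✶.IsCircuit' K)
    (hfinE : M.eRk' M.E ≠ ⊤) : Even (C ∩ K).ncard := by
  classical
  rcases (C ∩ K).eq_empty_or_nonempty with he | ⟨e₀, he₀⟩
  · simp [he]
  set H := M.E \ K with hH
  have hKE : K ⊆ M.E := by simpa using hK.1.subset_ground
  have hCE : C ⊆ M.E := hC.1.subset_ground
  obtain ⟨I, hI⟩ := M.exists_isBasis' H
  have hIE : I ⊆ M.E := hI.indep.subset_ground
  have hIfin : I.Finite :=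
    Set.encard_ne_top_iff.1 fun ht => hfinE (top_le_iff.1 (ht ▸ le_eRk'_of hI.indep hIE))
  set W := span (ZMod 2) (v '' I) with hW
  have hHW : v '' H ⊆ ↑W := image_subset_span_basis' hv hI diff_subset
  have hful : ∀ e ∈ K, M.eRk' (insert e H) = M.eRk' M.E :=
    fun e he => cocircuit_insert_full hK he hfinE
  have hHlt : M.eRk' H ≠ M.eRk' M.E := fun h =>
    hK.1.not_indep (dual_indep_iff_exists'.2
      ⟨hKE, I, base_of_full_basis' hI h hfinE, ((subset_diff.1 hI.subset).2).symm⟩)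
  -- rank comparison helper
  have hrank_le : ∀ A : Set α, A ⊆ M.E → v '' A ⊆ ↑W → M.eRk' A ≤ M.eRk' H := by
    intro A hAE hAW
    obtain ⟨J, hJ⟩ := M.exists_isBasis' A
    rw [hJ.eRk'_eq, hI.eRk'_eq]
    refine (encard_le_of_subset_span hv hJ.indep (hIfin.image v)
      ((Set.image_mono hJ.subset).trans hAW)).trans (Set.encard_image_le v I)
  have he₀W : v e₀ ∉ W := by
    intro hmem
    refine hHlt (le_antisymm (eRk'_mono diff_subset) ?_)
    rw [← hful e₀ he₀.2]
    refine hrank_le _ (insert_subset (hCE he₀.1) diff_subset) ?_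
    rintro _ ⟨x, hx, rfl⟩
    rcases hx with rfl | hxH
    · exact hmem
    · exact hHW (mem_image_of_mem v hxH)
  obtain ⟨f, hf0, hfW⟩ := W.exists_dual_map_eq_bot_of_notMem he₀W inferInstance
  have hfW' : ∀ w ∈ W, f w = 0 := by
    intro w hw
    have : f w ∈ W.map f := ⟨w, hw, rfl⟩
    rwa [hfW, Submodule.mem_bot] at this
  have hfK : ∀ e ∈ K, f (v e) ≠ 0 := by
    intro e he hfe
    obtain ⟨J, hJ⟩ := M.exists_isBasis' (insert e H)
    have hbase : M.IsBase J := base_of_full_basis' hJ (hful e he) hfinE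
    have hextra : v e₀ ∈ span (ZMod 2) (v '' insert e H) :=
      span_mono (Set.image_mono hJ.subset)
        (image_ground_subset_span_base hv hbase (mem_image_of_mem v (hCE he₀.1)))
    have hsub2 : span (ZMod 2) (v '' insert e H) ≤ W ⊔ span (ZMod 2) {v e} := by
      refine span_le.2 ?_
      rintro _ ⟨x, hx, rfl⟩
      rcases hx with rfl | hxH
      · exact Submodule.mem_sup_right (subset_span rfl)
      · exact Submodule.mem_sup_left (hHW (mem_image_of_mem v hxH))
    obtain ⟨w, hw, z, hz, hsum⟩ := Submodule.mem_sup.1 (hsub2 hextra)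
    obtain ⟨c, rfl⟩ := Submodule.mem_span_singleton.1 hz
    apply hf0
    rw [← hsum, map_add, hfW' w hw, map_smul, hfe, smul_zero, add_zero]
  -- circuit sum
  obtain ⟨s, hs, hsum⟩ := circuit_sum hv hC hCfin
  have h0 : ∑ e ∈ s, f (v e) = 0 := by rw [← map_sum, hsum, map_zero]
  have hsplit : ∑ e ∈ s, f (v e) = ∑ e ∈ s.filter (· ∈ K), f (v e) := by
    refine (Finset.sum_filter_of_ne ?_).symm
    intro e hes hne
    by_contra heK
    refine hne (hfW' _ (hHW ⟨e, ⟨hCE (hs ▸ Finset.mem_coe.2 hes), heK⟩, rfl⟩))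
  have hone : ∀ e ∈ s.filter (· ∈ K), f (v e) = 1 := by
    intro e hef
    have := hfK e (Finset.mem_filter.1 hef).2
    exact (zmod2_cases _).resolve_left this
  rw [hsplit, Finset.sum_congr rfl hone, Finset.sum_const, nsmul_eq_mul, mul_one] at h0
  have hdvd : 2 ∣ (s.filter (· ∈ K)).card := (ZMod.natCast_eq_zero_iff _ 2).1 h0
  have hcoe : ((s.filter (· ∈ K) : Finset α) : Set α) = C ∩ K := by
    ext x
    simp only [Finset.coe_filter, mem_setOf_eq, mem_inter_iff, ← hs, Finset.mem_coe]
  have : (C ∩ K).ncard = (s.filter (· ∈ K)).card := by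
    rw [← hcoe, Set.ncard_coe_finset]
  rw [this]
  exact even_iff_two_dvd.2 hdvd

end Matroid

namespace Matroid
open Set Submodule Finsupp
variable {α : Type u} {ι : Type u} {M : Matroid α} {I J B C K X Z : Set α} {a b : α}
  {v : α → ι → ZMod 2}

lemma no_four_rank_two (hv : ∀ I, M.Indep I ↔ I ⊆ M.E ∧
      LinearIndependent (ZMod 2) fun x : I => v x) {x1 x2 x3 x4 : α}
    (hXE : ({x1, x2, x3, x4} : Set α) ⊆ M.E)
    (h12 : x1 ≠ x2) (h13 : x1 ≠ x3) (h14 : x1 ≠ x4) (h23 : x2 ≠ x3) (h24 : x2 ≠ x4)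
    (h34 : x3 ≠ x4)
    (hpair : ∀ S : Set α, S ⊆ {x1, x2, x3, x4} → S.encard ≤ 2 → M.Indep S)
    (hrk : M.eRk' {x1, x2, x3, x4} ≤ 2) : False := by
  have hpair2 : ∀ a b : α, a ∈ ({x1, x2, x3, x4} : Set α) → b ∈ ({x1, x2, x3, x4} : Set α) →
      M.Indep {a, b} := by
    intro a b ha hb
    refine hpair _ ?_ ((Set.encard_insert_le _ _).trans (by norm_num))
    exact Set.insert_subset ha (Set.singleton_subset_iff.2 hb)
  have hmem : ∀ c : α, c ∈ ({x1, x2, x3, x4} : Set α) → c ≠ x1 → c ≠ x2 →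
      ∃ a b : ZMod 2, a • v x1 + b • v x2 = v c := by
    intro c hc hc1 hc2
    have hcE : c ∈ M.E := hXE hc
    have hnotmem : c ∉ ({x1, x2} : Set α) := by simp [hc1, hc2]
    have hdep : ¬ M.Indep (insert c {x1, x2}) := by
      intro hind
      have hsub : insert c ({x1, x2} : Set α) ⊆ {x1, x2, x3, x4} := by
        refine Set.insert_subset hc ?_
        intro y hy
        rcases hy with rfl | rfl
        · simp
        · simp
      have hcard : (insert c ({x1, x2} : Set α)).encard = 3 := by
        rw [Set.encard_insert_of_notMem hnotmem, Set.encard_pair h12]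
        norm_num
      have := le_eRk'_of hind hsub
      rw [hcard] at this
      exact absurd (this.trans hrk) (by norm_num)
    have hthis : v c ∈ span (ZMod 2) (v '' {x1, x2}) := not_not.1 fun hsp =>
      hdep ((indep_insert_iff hv (hpair2 x1 x2 (by simp) (by simp)) hcE hnotmem).2 hsp)
    rw [Set.image_pair] at hthis
    exact Submodule.mem_span_pair.1 hthis
  refine zmod2_pigeon (u1 := v x1) (u2 := v x2)
    (vec_ne_zero hv (hpair {x3} (by simp) (by simp)))
    (vec_ne_zero hv (hpair {x4} (by simp) (by simp)))
    (vec_ne hv h13.symm (hpair2 x3 x1 (by simp) (by simp)))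
    (vec_ne hv h23.symm (hpair2 x3 x2 (by simp) (by simp)))
    (vec_ne hv h14.symm (hpair2 x4 x1 (by simp) (by simp)))
    (vec_ne hv h24.symm (hpair2 x4 x2 (by simp) (by simp)))
    (vec_ne hv h34 (hpair2 x3 x4 (by simp) (by simp)))
    (hmem x3 (by simp) h13.symm h23.symm) (hmem x4 (by simp) h14.symm h24.symm)

lemma no_four_corank_two (hv : ∀ I, M.Indep I ↔ I ⊆ M.E ∧
      LinearIndependent (ZMod 2) fun x : I => v x) {Y : Set α} {x1 x2 x3 x4 : α}
    (hYE : Y ⊆ M.E) (hXE : ({x1, x2, x3, x4} : Set α) ⊆ M.E)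
    (h12 : x1 ≠ x2) (h13 : x1 ≠ x3) (h14 : x1 ≠ x4) (h23 : x2 ≠ x3) (h24 : x2 ≠ x4)
    (h34 : x3 ≠ x4)
    (hfull : ∀ a b : α, a ∈ ({x1, x2, x3, x4} : Set α) → b ∈ ({x1, x2, x3, x4} : Set α) →
      a ≠ b → M.eRk' (Y ∪ {a, b}) = M.eRk' M.E)
    (hrE : M.eRk' M.E = M.eRk' Y + 2) (hfinE : M.eRk' M.E ≠ ⊤) : False := by
  obtain ⟨I, hI⟩ := M.exists_isBasis' Y
  have hIE : I ⊆ M.E := hI.indep.subset_ground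
  have hIfin : I.Finite :=
    Set.encard_ne_top_iff.1 fun ht => hfinE (top_le_iff.1 (ht ▸ le_eRk'_of hI.indep hIE))
  have hInt : I.encard ≠ ⊤ := Set.encard_ne_top_iff.2 hIfin
  set W := span (ZMod 2) (v '' I) with hWdef
  have hYW : v '' Y ⊆ ↑W := image_subset_span_basis' hv hI hYE
  have key : ∀ a b : α, a ∈ ({x1, x2, x3, x4} : Set α) → b ∈ ({x1, x2, x3, x4} : Set α) →
      a ≠ b → v a ∉ (W ⊔ span (ZMod 2) {v b} : Submodule (ZMod 2) (ι → ZMod 2)) := by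
    intro a b ha hb hab hmem
    obtain ⟨J, hJ⟩ := M.exists_isBasis' (Y ∪ {a, b})
    have hJcard : J.encard = I.encard + 2 := by
      rw [← hJ.eRk'_eq, hfull a b ha hb hab, hrE, hI.eRk'_eq]
    have hsup : (W ⊔ span (ZMod 2) {v b} : Submodule (ZMod 2) (ι → ZMod 2))
        = span (ZMod 2) (v '' I ∪ {v b}) := by
      rw [Submodule.span_union]
    have hsub : v '' J ⊆ ↑(span (ZMod 2) (v '' I ∪ {v b})) := by
      rw [← hsup]
      rintro _ ⟨x, hx, rfl⟩
      rcases hJ.subset hx with hxY | hxab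
      · exact Submodule.mem_sup_left (hYW (mem_image_of_mem v hxY))
      · rcases hxab with rfl | rfl
        · exact hmem
        · exact Submodule.mem_sup_right (subset_span rfl)
    have hle := encard_le_of_subset_span hv hJ.indep
      ((hIfin.image v).union (finite_singleton _)) hsub
    have hle2 : (v '' I ∪ {v b}).encard ≤ I.encard + 1 := by
      refine (Set.encard_union_le _ _).trans ?_
      rw [Set.encard_singleton]
      exact add_le_add_left (Set.encard_image_le v I) 1
    rw [hJcard] at hle
    have := hle.trans hle2
    rw [ENat.add_le_add_iff_left hInt] at this
    exact absurd this (by norm_num)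
  have hfull12 := hfull x1 x2 (by simp) (by simp) h12
  obtain ⟨J, hJ⟩ := M.exists_isBasis' (Y ∪ {x1, x2})
  have hbase : M.IsBase J := base_of_full_basis' hJ hfull12 hfinE
  have hallspan : ∀ e, e ∈ M.E →
      v e ∈ (W ⊔ span (ZMod 2) {v x1, v x2} : Submodule (ZMod 2) (ι → ZMod 2)) := by
    intro e he
    have h1 : v e ∈ span (ZMod 2) (v '' (Y ∪ {x1, x2})) :=
      span_mono (Set.image_mono hJ.subset)
        (image_ground_subset_span_base hv hbase (mem_image_of_mem v he))
    refine span_le.2 ?_ h1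
    rintro _ ⟨x, hx, rfl⟩
    rcases hx with hxY | hxab
    · exact Submodule.mem_sup_left (hYW (mem_image_of_mem v hxY))
    · rcases hxab with rfl | rfl
      · exact Submodule.mem_sup_right (subset_span (by simp))
      · exact Submodule.mem_sup_right (subset_span (by simp))
  have hne' : ∀ a b : α, a ∈ ({x1, x2, x3, x4} : Set α) → b ∈ ({x1, x2, x3, x4} : Set α) →
      a ≠ b → W.mkQ (v a) ≠ W.mkQ (v b) := by
    intro a b ha hb hab heq
    rw [Submodule.mkQ_apply, Submodule.mkQ_apply, Submodule.Quotient.eq] at heq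
    refine key a b ha hb hab ?_
    have hva : v a = (v a - v b) + v b := by abel
    rw [hva]
    exact Submodule.add_mem_sup heq (subset_span rfl)
  have hnz : ∀ a b : α, a ∈ ({x1, x2, x3, x4} : Set α) → b ∈ ({x1, x2, x3, x4} : Set α) →
      a ≠ b → W.mkQ (v a) ≠ 0 := by
    intro a b ha hb hab h0
    rw [Submodule.mkQ_apply, Submodule.Quotient.mk_eq_zero] at h0
    exact key a b ha hb hab (Submodule.mem_sup_left h0)
  have hspan34 : ∀ c, c ∈ ({x1, x2, x3, x4} : Set α) →
      ∃ a b : ZMod 2, a • W.mkQ (v x1) + b • W.mkQ (v x2) = W.mkQ (v c) := by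
    intro c hc
    obtain ⟨w, hw, z, hz, hsum⟩ := Submodule.mem_sup.1 (hallspan c (hXE hc))
    obtain ⟨s, t, rfl⟩ := Submodule.mem_span_pair.1 hz
    refine ⟨s, t, ?_⟩
    rw [← hsum, map_add, map_add, map_smul, map_smul]
    rw [show W.mkQ w = 0 by rw [Submodule.mkQ_apply, Submodule.Quotient.mk_eq_zero]; exact hw]
    rw [zero_add]
  exact zmod2_pigeon
    (hnz x3 x1 (by simp) (by simp) h13.symm) (hnz x4 x1 (by simp) (by simp) h14.symm)
    (hne' x3 x1 (by simp) (by simp) h13.symm) (hne' x3 x2 (by simp) (by simp) h23.symm)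
    (hne' x4 x1 (by simp) (by simp) h14.symm) (hne' x4 x2 (by simp) (by simp) h24.symm)
    (hne' x3 x4 (by simp) (by simp) h34)
    (hspan34 x3 (by simp)) (hspan34 x4 (by simp))

end Matroid

namespace Matroid
variable {α : Type u}

lemma encard_coe_ncard {s : Set α} (hs : s.Finite) : (s.ncard : ℕ∞) = s.encard := by
  rw [Set.ncard_def, ENat.coe_toNat (Set.encard_ne_top_iff.2 hs)]

end Matroid


/-- in a 3-connected binary matroid, a 4-element side of a
3-separation is a quad or a 4-fan. -/
theorem statement_4 {α : Type u} (M : Matroid α) (hMbin : M.IsBinary)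
    (hM3 : M.ThreeConnected) (X Y : Set α)
    (hsep : M.IsKSep 3 X Y) (hX : X.encard = 4) :
    M.IsQuad X ∨
      ∃ a b c d : α, X = {a, b, c, d} ∧ M.Is4FanOrdering a b c d := by
  classical
  obtain ⟨hdisj, hunion, h3X, h3Y, hconn⟩ := hsep
  obtain ⟨ι, v, hv⟩ := hMbin
  have hXE : X ⊆ M.E := hunion ▸ Set.subset_union_left
  have hYE : Y ⊆ M.E := hunion ▸ Set.subset_union_right
  have hYeq : M.E \ X = Y := by
    rw [← hunion, Set.union_diff_cancel_left (by rw [Set.disjoint_iff_inter_eq_empty.1 hdisj])]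
  have hXfin : X.Finite := Set.encard_ne_top_iff.1 (by rw [hX]; exact (by norm_num))
  have hno1 : ∀ Z : Set α, Z ⊆ M.E → 1 ≤ Z.encard → 1 ≤ (M.E \ Z).encard →
      ¬ (M.eRk' Z + M.eRk' (M.E \ Z) ≤ M.eRk' M.E) := by
    intro Z hZE h1 h2 hle
    exact hM3 1 one_pos (by norm_num) Z (M.E \ Z)
      ⟨disjoint_sdiff_self_right, Set.union_diff_cancel hZE, h1, h2, by simpa [ConnBddBy] using hle⟩
  have hno2 : ∀ Z : Set α, Z ⊆ M.E → 2 ≤ Z.encard → 2 ≤ (M.E \ Z).encard →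
      ¬ (M.eRk' Z + M.eRk' (M.E \ Z) ≤ M.eRk' M.E + 1) := by
    intro Z hZE h1 h2 hle
    exact hM3 2 (by norm_num) (by norm_num) Z (M.E \ Z)
      ⟨disjoint_sdiff_self_right, Set.union_diff_cancel hZE, h1, h2, by simpa [ConnBddBy] using hle⟩
  have hXne : X.Nonempty := Set.encard_pos.1 (by rw [hX]; norm_num)
  have hfinE : M.eRk' M.E ≠ ⊤ := by
    intro htop
    obtain ⟨x, hx⟩ := hXne
    have hYsub : Y ⊆ M.E \ {x} := Set.subset_diff.2
      ⟨hYE, (Set.disjoint_singleton_right.2 fun hxY => (hdisj.ne_of_mem hx hxY) rfl)⟩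
    refine hno1 {x} (Set.singleton_subset_iff.2 (hXE hx)) (by simp) ?_ ?_
    · exact le_trans (by norm_num : (1:ℕ∞) ≤ 3) (h3Y.trans (Set.encard_mono hYsub))
    · rw [htop]; exact le_top
  have hYfinr : M.eRk' Y ≠ ⊤ := fun h => hfinE (top_le_iff.1 (h ▸ eRk'_mono hYE))
  have hXr4 : M.eRk' X ≤ 4 := (eRk'_le_encard M X).trans (by rw [hX])
  have hXfinr : M.eRk' X ≠ ⊤ := fun h => by rw [h] at hXr4; exact absurd hXr4 (by norm_num)
  have hle2 : M.eRk' X + M.eRk' Y ≤ M.eRk' M.E + 2 := by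
    have h := hconn
    rw [ConnBddBy, hYeq] at h
    simpa using h
  have hgt : ¬ (M.eRk' X + M.eRk' Y ≤ M.eRk' M.E + 1) := by
    have h := hno2 X hXE (le_trans (by norm_num) h3X)
      (by rw [hYeq]; exact le_trans (by norm_num) h3Y)
    rwa [hYeq] at h
  have hge : M.eRk' M.E + 2 ≤ M.eRk' X + M.eRk' Y := by
    have h := Order.add_one_le_of_lt (not_le.1 hgt)
    calc M.eRk' M.E + 2 = M.eRk' M.E + 1 + 1 := by rw [add_assoc]; norm_num
      _ ≤ _ := h
  have heq : M.eRk' X + M.eRk' Y = M.eRk' M.E + 2 := le_antisymm hle2 hge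
  set nE := (M.eRk' M.E).toNat with hnE
  set nX := (M.eRk' X).toNat with hnX
  set nY := (M.eRk' Y).toNat with hnY
  have hcE : (nE : ℕ∞) = M.eRk' M.E := ENat.coe_toNat hfinE
  have hcX : (nX : ℕ∞) = M.eRk' X := ENat.coe_toNat hXfinr
  have hcY : (nY : ℕ∞) = M.eRk' Y := ENat.coe_toNat hYfinr
  have heqN : nX + nY = nE + 2 := by
    have h1 := heq
    rw [← hcX, ← hcY, ← hcE] at h1
    exact_mod_cast h1
  have hYleE : nY ≤ nE := by
    have h := eRk'_mono (M := M) hYE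
    rw [← hcY, ← hcE] at h
    exact_mod_cast h
  have hXle4 : nX ≤ 4 := by
    have h := hXr4
    rw [← hcX] at h
    exact_mod_cast h
  -- no small circuits
  have hnoC : ∀ C, C ⊆ X → M.IsCircuit' C → 3 ≤ C.encard := by
    intro C hCX hC
    by_contra hlt
    push_neg at hlt
    have hCfin : C.Finite := hXfin.subset hCX
    have hYsub : Y ⊆ M.E \ C := Set.subset_diff.2
      ⟨hYE, Set.disjoint_left.2 fun a haY haC => (hdisj.ne_of_mem (hCX haC) haY) rfl⟩
    have h2Y : (2 : ℕ∞) ≤ (M.E \ C).encard :=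
      le_trans (by norm_num) (h3Y.trans (Set.encard_mono hYsub))
    have h1n : 1 ≤ C.ncard := by
      exact (Set.ncard_pos hCfin).2 hC.1.nonempty
    have h2n : C.ncard ≤ 2 := by
      have h := hlt
      rw [← encard_coe_ncard hCfin] at h
      have h' : C.ncard < 3 := by exact_mod_cast h
      omega
    rcases (by omega : C.ncard = 1 ∨ C.ncard = 2) with h1 | h1
    · obtain ⟨x, rfl⟩ := Set.ncard_eq_one.1 h1
      have h0 : M.eRk' {x} ≤ 0 := by
        refine eRk'_le_iff.2 fun I hI hIs => ?_
        rcases Set.subset_singleton_iff_eq.1 hIs with rfl | rfl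
        · simp
        · exact absurd hI hC.1.not_indep
      refine hno1 {x} (hCX.trans hXE) (by simp) (le_trans (by norm_num) h2Y) ?_
      calc M.eRk' {x} + M.eRk' (M.E \ {x}) ≤ 0 + M.eRk' M.E :=
            add_le_add h0 (eRk'_mono Set.diff_subset)
        _ = M.eRk' M.E := zero_add _
    · obtain ⟨x, y, hxy, rfl⟩ := Set.ncard_eq_two.1 h1
      have h1r : M.eRk' {x, y} ≤ 1 := by
        refine eRk'_le_iff.2 fun I hI hIs => ?_
        have hss : I ⊂ {x, y} := hIs.ssubset_of_ne fun h => hC.1.not_indep (h ▸ hI)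
        have hlt2 := Set.Finite.encard_lt_encard (hCfin.subset hss.subset) hss
        rw [Set.encard_pair hxy] at hlt2
        have h2' : I.encard < 1 + 1 := by rwa [show (1 + 1 : ℕ∞) = 2 by norm_num]
        exact Order.le_of_lt_add_one h2'
      refine hno2 {x, y} (hCX.trans hXE) (by rw [Set.encard_pair hxy]) h2Y ?_
      calc M.eRk' {x, y} + M.eRk' (M.E \ {x, y}) ≤ 1 + M.eRk' M.E :=
            add_le_add h1r (eRk'_mono Set.diff_subset)
        _ = M.eRk' M.E + 1 := add_comm _ _
  -- no small cocircuits
  have hnoK : ∀ K, K ⊆ X → M✶.IsCircuit' K → 3 ≤ K.encard := by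
    intro K hKX hK
    by_contra hlt
    push_neg at hlt
    have hKfin : K.Finite := hXfin.subset hKX
    have hcompl : M.eRk' (M.E \ K) ≠ M.eRk' M.E := compl_not_full_of_dual_dep hK.1 hfinE
    have hcompl' : M.eRk' (M.E \ K) + 1 ≤ M.eRk' M.E :=
      Order.add_one_le_of_lt ((eRk'_mono Set.diff_subset).lt_of_ne hcompl)
    have hYsub : Y ⊆ M.E \ K := Set.subset_diff.2
      ⟨hYE, Set.disjoint_left.2 fun a haY haK => (hdisj.ne_of_mem (hKX haK) haY) rfl⟩
    have h2Y : (2 : ℕ∞) ≤ (M.E \ K).encard :=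
      le_trans (by norm_num) (h3Y.trans (Set.encard_mono hYsub))
    have h1n : 1 ≤ K.ncard := by
      exact (Set.ncard_pos hKfin).2 hK.1.nonempty
    have h2n : K.ncard ≤ 2 := by
      have h := hlt
      rw [← encard_coe_ncard hKfin] at h
      have h' : K.ncard < 3 := by exact_mod_cast h
      omega
    have hKE : K ⊆ M.E := hKX.trans hXE
    rcases (by omega : K.ncard = 1 ∨ K.ncard = 2) with h1 | h1
    · refine hno1 K hKE (by rw [← encard_coe_ncard hKfin, h1]; exact_mod_cast le_rfl)
        (le_trans (by norm_num) h2Y) ?_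
      calc M.eRk' K + M.eRk' (M.E \ K) ≤ 1 + M.eRk' (M.E \ K) := by
            refine add_le_add_left ((eRk'_le_encard M K).trans ?_) _
            rw [← encard_coe_ncard hKfin, h1]
            exact_mod_cast le_rfl
        _ = M.eRk' (M.E \ K) + 1 := add_comm _ _
        _ ≤ M.eRk' M.E := hcompl'
    · refine hno2 K hKE (by rw [← encard_coe_ncard hKfin, h1]; exact_mod_cast le_rfl) h2Y ?_
      calc M.eRk' K + M.eRk' (M.E \ K) ≤ 2 + M.eRk' (M.E \ K) := by
            refine add_le_add_left ((eRk'_le_encard M K).trans ?_) _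
            rw [← encard_coe_ncard hKfin, h1]
            exact_mod_cast le_rfl
        _ = (M.eRk' (M.E \ K) + 1) + 1 := by
            rw [add_comm, show (2:ℕ∞) = 1 + 1 by norm_num, ← add_assoc]
        _ ≤ M.eRk' M.E + 1 := add_le_add_left hcompl' 1
  -- four distinct elements
  obtain ⟨x1, hx1⟩ := hXne
  have hX3' : (X \ {x1}).encard = 3 := by
    have h3 : (X \ {x1}).encard + 1 = 3 + 1 := by
      rw [Set.encard_diff_singleton_add_one hx1, hX]; norm_num
    exact WithTop.add_right_cancel ENat.one_ne_top h3
  obtain ⟨x2, x3, x4, h23, h24, h34, hXrest⟩ := Set.encard_eq_three.1 hX3'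
  have hx1r : x1 ∉ ({x2, x3, x4} : Set α) := hXrest ▸ fun h => h.2 rfl
  have h12 : x1 ≠ x2 := fun h => hx1r (by rw [h]; simp)
  have h13 : x1 ≠ x3 := fun h => hx1r (by rw [h]; simp)
  have h14 : x1 ≠ x4 := fun h => hx1r (by rw [h]; simp)
  have hX4 : X = {x1, x2, x3, x4} := by
    calc X = insert x1 (X \ {x1}) := by
          rw [Set.insert_diff_singleton, Set.insert_eq_self.2 hx1]
      _ = {x1, x2, x3, x4} := by rw [hXrest]
  -- small subsets of X are independent
  have hsmall : ∀ S, S ⊆ X → S.encard ≤ 2 → M.Indep S := by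
    intro S hSX hS2
    by_contra hdep
    obtain ⟨C, hCS, hC⟩ := exists_circuit_of_dep (hXfin.subset hSX) ⟨hdep, hSX.trans hXE⟩
    exact absurd (((hnoC C (hCS.trans hSX) hC).trans (Set.encard_mono hCS)).trans hS2)
      (by norm_num)
  -- exclude rank 2
  have hnX2 : nX ≠ 2 := by
    intro h2
    have hrk : M.eRk' {x1, x2, x3, x4} ≤ 2 := by
      rw [← hX4]
      exact le_of_eq (by rw [← hcX, h2]; rfl)
    exact no_four_rank_two hv (hX4 ▸ hXE) h12 h13 h14 h23 h24 h34
      (fun S hS h2' => hsmall S (hX4 ▸ hS) h2') hrk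
  -- exclude rank 4
  have hnX4 : nX ≠ 4 := by
    intro h4
    have hfull : ∀ a b : α, a ∈ ({x1, x2, x3, x4} : Set α) → b ∈ ({x1, x2, x3, x4} : Set α) →
        a ≠ b → M.eRk' (Y ∪ {a, b}) = M.eRk' M.E := by
      intro a b ha hb hab
      have habX : ({a, b} : Set α) ⊆ X := by
        rw [hX4]; exact Set.insert_subset ha (Set.singleton_subset_iff.2 hb)
      have hcomp : M.E \ (X \ {a, b}) = Y ∪ {a, b} := by
        ext z
        constructor
        · rintro ⟨hzE, hz⟩
          rcases (hunion ▸ hzE : z ∈ X ∪ Y) with hzX | hzY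
          · right
            by_contra hzab
            exact hz ⟨hzX, hzab⟩
          · exact Or.inl hzY
        · rintro (hzY | hzab)
          · exact ⟨hYE hzY, fun h => (hdisj.ne_of_mem h.1 hzY) rfl⟩
          · exact ⟨hXE (habX hzab), fun h => h.2 hzab⟩
      have hZcard : (X \ {a, b}).encard = 2 := by
        have hsum : (X \ {a, b}).encard + (X ∩ {a, b}).encard = X.encard :=
          Set.encard_diff_add_encard_inter X {a, b}
        rw [Set.inter_eq_self_of_subset_right habX, Set.encard_pair hab, hX] at hsum
        have h4' : (X \ {a, b}).encard + 2 = 2 + 2 := by rw [hsum]; norm_num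
        exact WithTop.add_right_cancel (by norm_num : (2:ℕ∞) ≠ ⊤) h4'
      have h2c : (2 : ℕ∞) ≤ (M.E \ (X \ {a, b})).encard := by
        rw [hcomp]
        exact le_trans (le_trans (by norm_num) h3Y) (Set.encard_mono Set.subset_union_left)
      have hns := hno2 (X \ {a, b}) ((Set.diff_subset).trans hXE) (le_of_eq hZcard.symm) h2c
      rw [hcomp] at hns
      refine le_antisymm (eRk'_mono (Set.union_subset hYE (habX.trans hXE))) ?_
      by_contra hnle
      push_neg at hnle
      refine hns ?_
      calc M.eRk' (X \ {a, b}) + M.eRk' (Y ∪ {a, b})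
          ≤ 2 + M.eRk' (Y ∪ {a, b}) :=
            add_le_add_left ((eRk'_le_encard _ _).trans (le_of_eq hZcard)) _
        _ = (M.eRk' (Y ∪ {a, b}) + 1) + 1 := by
            rw [add_comm, show (2:ℕ∞) = 1 + 1 by norm_num, ← add_assoc]
        _ ≤ M.eRk' M.E + 1 :=
            add_le_add_left (Order.add_one_le_of_lt hnle) 1
    have hrE2 : M.eRk' M.E = M.eRk' Y + 2 := by
      rw [← hcE, ← hcY]
      have : nE = nY + 2 := by omega
      rw [this]
      push_cast
      ring
    exact no_four_corank_two hv hYE (hX4 ▸ hXE) h12 h13 h14 h23 h24 h34 hfull hrE2 hfinE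
  have hnX3 : nX = 3 := by omega
  have hrX3 : M.eRk' X = 3 := by rw [← hcX, hnX3]; rfl
  have hXdep : M.Dep X := by
    rw [dep_iff]
    refine ⟨fun hind => ?_, hXE⟩
    rw [hind.eRk'_self, hX] at hrX3
    norm_num at hrX3
  obtain ⟨C, hCX, hC⟩ := exists_circuit_of_dep hXfin hXdep
  have hYlt : M.eRk' (M.E \ X) ≠ M.eRk' M.E := by
    rw [hYeq, ← hcY, ← hcE]
    intro h
    have : nY = nE := by exact_mod_cast h
    omega
  have hKdep : M✶.Dep X := dual_dep_of_compl_not_full hXE hYlt hfinE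
  obtain ⟨K, hKX, hK⟩ := exists_circuit_of_dep (M := M✶) hXfin hKdep
  have hC3 := hnoC C hCX hC
  have hK3 := hnoK K hKX hK
  have hCfin : C.Finite := hXfin.subset hCX
  have hKfin : K.Finite := hXfin.subset hKX
  have hCle : C.encard ≤ 4 := (Set.encard_mono hCX).trans (le_of_eq hX)
  have hKle : K.encard ≤ 4 := (Set.encard_mono hKX).trans (le_of_eq hX)
  -- sizes as naturals
  have hCn3 : 3 ≤ C.ncard := by
    have := hC3; rw [← encard_coe_ncard hCfin] at this; exact_mod_cast this
  have hCn4 : C.ncard ≤ 4 := by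
    have := hCle; rw [← encard_coe_ncard hCfin] at this; exact_mod_cast this
  have hKn3 : 3 ≤ K.ncard := by
    have := hK3; rw [← encard_coe_ncard hKfin] at this; exact_mod_cast this
  have hKn4 : K.ncard ≤ 4 := by
    have := hKle; rw [← encard_coe_ncard hKfin] at this; exact_mod_cast this
  have hXn : X.ncard = 4 := by
    have : ((X.ncard : ℕ∞)) = 4 := by rw [encard_coe_ncard hXfin, hX]
    exact_mod_cast this
  have hEven := even_circuit_cocircuit hv hC hCfin hK hfinE
  rcases (by omega : C.ncard = 4 ∨ C.ncard = 3) with hC4 | hC3'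
  · have hCX4 : C = X := Set.eq_of_subset_of_ncard_le hCX (by omega) hXfin
    rcases (by omega : K.ncard = 4 ∨ K.ncard = 3) with hK4 | hK3'
    · have hKX4 : K = X := Set.eq_of_subset_of_ncard_le hKX (by omega) hXfin
      exact Or.inl ⟨hCX4 ▸ hC, hKX4 ▸ hK, hX⟩
    · exfalso
      have hinter : C ∩ K = K := hCX4 ▸ Set.inter_eq_self_of_subset_right hKX
      rw [hinter, hK3'] at hEven
      exact absurd hEven (by decide)
  · rcases (by omega : K.ncard = 4 ∨ K.ncard = 3) with hK4 | hK3'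
    · exfalso
      have hKX4 : K = X := Set.eq_of_subset_of_ncard_le hKX (by omega) hXfin
      have hinter : C ∩ K = C := hKX4 ▸ Set.inter_eq_self_of_subset_left hCX
      rw [hinter, hC3'] at hEven
      exact absurd hEven (by decide)
    · -- fan case
      have hUfin : (C ∪ K).Finite := hCfin.union hKfin
      have hUle : (C ∪ K).ncard ≤ 4 := by
        have := Set.ncard_le_ncard (Set.union_subset hCX hKX) hXfin
        omega
      have hsum : (C ∪ K).ncard + (C ∩ K).ncard = C.ncard + K.ncard :=
        Set.ncard_union_add_ncard_inter C K hCfin hKfin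
      have hIfin : (C ∩ K).Finite := hCfin.inter_of_left K
      have hI2 : (C ∩ K).ncard = 2 := by
        rcases hEven with ⟨m, hm⟩
        have hIle : (C ∩ K).ncard ≤ 3 := by
          have := Set.ncard_le_ncard (Set.inter_subset_left (s := C) (t := K)) hCfin
          omega
        omega
      have hU4 : (C ∪ K).ncard = 4 := by omega
      have hXU : C ∪ K = X := Set.eq_of_subset_of_ncard_le (Set.union_subset hCX hKX)
        (by omega) hXfin
      obtain ⟨b, c, hbc, hbcK⟩ := Set.ncard_eq_two.1 hI2
      have hCd : (C \ K).ncard = 1 := by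
        rw [← Set.diff_self_inter, Set.ncard_diff Set.inter_subset_left hIfin, hI2, hC3']
      have hKd : (K \ C).ncard = 1 := by
        rw [← Set.diff_self_inter, Set.inter_comm K C,
          Set.ncard_diff (Set.inter_subset_right) hIfin, hI2, hK3']
      obtain ⟨a, ha⟩ := Set.ncard_eq_one.1 hCd
      obtain ⟨d, hd⟩ := Set.ncard_eq_one.1 hKd
      have hCabc : C = {a, b, c} := by
        have h1 : C = C ∩ K ∪ C \ K := (Set.inter_union_diff C K).symm
        rw [hbcK, ha] at h1
        rw [h1, Set.union_comm, Set.singleton_union]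
      have hKbcd : K = {b, c, d} := by
        have h1 : K = K ∩ C ∪ K \ C := (Set.inter_union_diff K C).symm
        rw [Set.inter_comm, hbcK, hd] at h1
        rw [h1, Set.union_singleton, Set.insert_comm d b, Set.pair_comm d c]
      have hXabcd : X = {a, b, c, d} := by
        have hsub : ({b, c} : Set α) ⊆ {b, c, d} := by
          intro z hz; simp only [Set.mem_insert_iff, Set.mem_singleton_iff] at hz ⊢; tauto
        rw [← hXU, hCabc, hKbcd, Set.insert_union, Set.union_eq_self_of_subset_left hsub]
      refine Or.inr ⟨a, b, c, d, hXabcd, ?_, ?_, ?_⟩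
      · rw [← hXabcd, hX]
      · exact ⟨hCabc ▸ hC, by rw [← hCabc, ← encard_coe_ncard hCfin, hC3']; rfl⟩
      · exact ⟨hKbcd ▸ hK, by rw [← hKbcd, ← encard_coe_ncard hKfin, hK3']; rfl⟩
end

section
/- Let M be an internally 4-connected binary matroid with |E(M)| ≥ 8, let e ∈ E(M) be such that M\e is 3-connected, and let (a, b, c, d) be a 4-fan of M\e. Then {b, c, d, e} is a cocircuit of M. -/
open scoped Matroid

universe u v

open Matroid

namespace Matroid

variable {α : Type u}

open Set

lemma eRk_le_of_forall' {M : Matroid α} {X : Set α} {k : ℕ∞}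
    (h : ∀ I, M.Indep I → I ⊆ X → I.encard ≤ k) : M.eRk' X ≤ k :=
  iSup₂_le fun I hI => h I hI.1 hI.2

lemma encard_le_eRk' {M : Matroid α} {X I : Set α} (hI : M.Indep I) (hIX : I ⊆ X) :
    I.encard ≤ M.eRk' X :=
  le_biSup _ ⟨hI, hIX⟩

lemma eRk_add_le' {M : Matroid α} {Y : Set α} {a k : ℕ∞}
    (h : ∀ I, M.Indep I → I ⊆ Y → I.encard + a ≤ k) : M.eRk' Y + a ≤ k := by
  have heq : M.eRk' Y + a = ⨆ I ∈ {I : Set α | M.Indep I ∧ I ⊆ Y}, (I.encard + a) :=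
    ENat.biSup_add (s := {I : Set α | M.Indep I ∧ I ⊆ Y}) ⟨∅, M.empty_indep, empty_subset _⟩ _
  rw [heq]
  exact iSup₂_le fun I hI => h I hI.1 hI.2

lemma main_contra' {M : Matroid α}
    (hMi4 : M.InternallyFourConnected)
    (hcard : (8 : ℕ∞) ≤ M.E.encard) {a b c d : α}
    (hX4 : ({a, b, c, d} : Set α).encard = 4)
    (htri : M.Dep {a, b, c})
    (hK : M✶.Dep {b, c, d}) : False := by
  set X : Set α := {a, b, c, d} with hXdef
  have hKX : ({b, c, d} : Set α) ⊆ X := by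
    intro x hx
    simp only [hXdef, mem_insert_iff, mem_singleton_iff] at hx ⊢
    tauto
  have habcX : ({a, b, c} : Set α) ⊆ X := by
    intro x hx
    simp only [hXdef, mem_insert_iff, mem_singleton_iff] at hx ⊢
    tauto
  have hXE : X ⊆ M.E := by
    have h1 : ({a, b, c} : Set α) ⊆ M.E := htri.subset_ground
    have h2 : ({b, c, d} : Set α) ⊆ M.E := hK.subset_ground
    intro x hx
    simp only [hXdef, mem_insert_iff, mem_singleton_iff] at hx
    rcases hx with rfl | rfl | rfl | rfl
    · exact h1 (by simp)
    · exact h1 (by simp)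
    · exact h1 (by simp)
    · exact h2 (by simp)
  have h3 : M.eRk' X ≤ 3 := by
    apply eRk_le_of_forall'
    intro I hI hIX
    have hne : I ≠ X := by
      rintro rfl
      exact htri.not_indep (hI.subset habcX)
    have hlt : I.encard < X.encard :=
      ((Set.toFinite X).subset hIX).encard_lt_encard (hIX.ssubset_of_ne hne)
    rw [hX4, show (4 : ℕ∞) = 3 + 1 by norm_num] at hlt
    exact (ENat.lt_add_one_iff (by norm_num)).mp hlt
  have hY1 : M.eRk' (M.E \ X) + 1 ≤ M.eRk' M.E := by
    apply eRk_add_le'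
    intro I hI hIY
    have hnb : ¬ M.IsBase I := by
      intro hB
      exact hK.not_indep (dual_indep_iff_exists'.mpr ⟨hK.subset_ground,
        ⟨I, hB, Set.disjoint_left.mpr fun x hx hxI => (hIY hxI).2 (hKX hx)⟩⟩)
    obtain ⟨B, hB⟩ := M.exists_isBase
    obtain ⟨x, hx, hins⟩ := hI.exists_insert_of_not_isBase hnb hB
    calc I.encard + 1 = (insert x I).encard := (Set.encard_insert_of_notMem hx.2).symm
      _ ≤ M.eRk' M.E := encard_le_eRk' hins hins.subset_ground
  have hconn : M.ConnBddBy X 2 := by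
    show M.eRk' X + M.eRk' (M.E \ X) ≤ M.eRk' M.E + ((2 : ℕ) : ℕ∞)
    calc M.eRk' X + M.eRk' (M.E \ X) ≤ 3 + M.eRk' (M.E \ X) := add_le_add_left h3 _
      _ = (M.eRk' (M.E \ X) + 1) + 2 := by ring
      _ ≤ M.eRk' M.E + 2 := add_le_add_left hY1 _
      _ = M.eRk' M.E + ((2 : ℕ) : ℕ∞) := by norm_num
  have hYE : M.E.encard ≤ X.encard + (M.E \ X).encard := by
    conv_lhs => rw [← Set.union_diff_cancel hXE]
    exact Set.encard_union_le _ _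
  have hY4 : (4 : ℕ∞) ≤ (M.E \ X).encard := by
    rw [hX4] at hYE
    have h8 : (4 : ℕ∞) + 4 ≤ 4 + (M.E \ X).encard := le_trans (by norm_num) (hcard.trans hYE)
    exact (WithTop.add_le_add_iff_left (by norm_num : (4 : ℕ∞) ≠ ⊤)).mp h8
  have hsep : M.IsKSep 3 X (M.E \ X) := by
    refine ⟨disjoint_sdiff_right, Set.union_diff_cancel hXE, ?_, ?_, hconn⟩
    · rw [hX4]
      norm_num
    · refine le_trans ?_ hY4
      norm_num
  rcases hMi4.2 X (M.E \ X) hsep with h | h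
  · rw [hX4] at h
    norm_num at h
  · refine absurd (hY4.trans h) ?_
    norm_num

lemma del_dual_indep_iff_of_mem_closure {M : Matroid α} {e : α}
    (hP : e ∈ M.closure (M.E \ {e})) {X : Set α} (hX : X ⊆ M.E \ {e}) :
    (M ↾ (M.E \ {e}))✶.Indep X ↔ M✶.Indep (insert e X) := by
  have hR : M.E \ {e} ⊆ M.E := diff_subset
  have he : e ∈ M.E := M.closure_subset_ground _ hP
  constructor
  · intro hN
    rw [dual_indep_iff_exists'] at hN
    obtain ⟨hXg, B, hB, hdj⟩ := hN
    rw [isBase_restrict_iff hR] at hB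
    have hBbase : M.IsBase B := by
      apply hB.indep.isBase_of_ground_subset_closure
      rw [hB.closure_eq_closure]
      intro x hx
      rcases eq_or_ne x e with rfl | hxe
      · exact hP
      · exact M.subset_closure (M.E \ {e}) hR ⟨hx, hxe⟩
    refine dual_indep_iff_exists'.mpr ⟨insert_subset he (hX.trans hR), B, hBbase, ?_⟩
    rw [Set.disjoint_left]
    intro x hx hxB
    rcases Set.mem_insert_iff.mp hx with rfl | hxX
    · exact (hB.subset hxB).2 rfl
    · exact Set.disjoint_left.mp hdj hxX hxB
  · intro hMind
    rw [dual_indep_iff_exists'] at hMind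
    obtain ⟨hXg, B, hB, hdj⟩ := hMind
    have heB : e ∉ B := fun h => Set.disjoint_left.mp hdj (Set.mem_insert _ _) h
    have hBR : B ⊆ M.E \ {e} := fun x hx =>
      ⟨hB.subset_ground hx, fun hxe => heB (by rwa [Set.mem_singleton_iff.mp hxe] at hx)⟩
    have hBasis : M.IsBasis B (M.E \ {e}) :=
      hB.indep.isBasis_of_subset_of_subset_closure hBR (by rw [hB.closure_eq]; exact hR)
    exact dual_indep_iff_exists'.mpr ⟨hX, B, (isBase_restrict_iff hR).mpr hBasis,
      hdj.mono_left (subset_insert _ _)⟩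

lemma del_dual_indep_iff_of_not_mem_closure {M : Matroid α} {e : α} (he : e ∈ M.E)
    (hP : e ∉ M.closure (M.E \ {e})) {X : Set α} (hX : X ⊆ M.E \ {e}) :
    (M ↾ (M.E \ {e}))✶.Indep X ↔ M✶.Indep X := by
  have hR : M.E \ {e} ⊆ M.E := diff_subset
  constructor
  · intro hN
    rw [dual_indep_iff_exists'] at hN
    obtain ⟨hXg, B, hB, hdj⟩ := hN
    rw [isBase_restrict_iff hR] at hB
    have heB : e ∉ B := fun h => (hB.subset h).2 rfl
    have hecl : e ∉ M.closure B := by rw [hB.closure_eq_closure]; exact hP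
    have hins : M.Indep (insert e B) :=
      (hB.indep.insert_indep_iff_of_notMem heB).mpr ⟨he, hecl⟩
    have hbase : M.IsBase (insert e B) := by
      apply hins.isBase_of_ground_subset_closure
      intro x hx
      rcases eq_or_ne x e with rfl | hxe
      · exact M.subset_closure _ hins.subset_ground (Set.mem_insert _ _)
      · exact M.closure_subset_closure (subset_insert e B)
          (by rw [hB.closure_eq_closure]; exact M.subset_closure _ hR ⟨hx, hxe⟩)
    refine dual_indep_iff_exists'.mpr ⟨hX.trans hR, insert e B, hbase, ?_⟩
    rw [Set.disjoint_left]
    intro x hxX hxB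
    rcases Set.mem_insert_iff.mp hxB with rfl | hxB'
    · exact (hX hxX).2 rfl
    · exact Set.disjoint_left.mp hdj hxX hxB'
  · intro hMind
    rw [dual_indep_iff_exists'] at hMind
    obtain ⟨hXg, B, hB, hdj⟩ := hMind
    have heB : e ∈ B := by
      by_contra heB
      have hBR : B ⊆ M.E \ {e} := fun x hx =>
        ⟨hB.subset_ground hx, fun h => heB (by rwa [Set.mem_singleton_iff.mp h] at hx)⟩
      exact hP (M.closure_subset_closure hBR (by rw [hB.closure_eq]; exact he))
    have hBd : M.Indep (B \ {e}) := hB.indep.diff {e}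
    have hbasis : M.IsBasis (B \ {e}) (M.E \ {e}) := by
      rw [isBasis_iff hR]
      refine ⟨hBd, Set.diff_subset_diff_left hB.subset_ground, ?_⟩
      intro J hJ hBJ hJR
      have heJ : e ∉ J := fun h => (hJR h).2 rfl
      have hJcl : e ∉ M.closure J := fun h => hP (M.closure_subset_closure hJR h)
      have hins : M.Indep (insert e J) := (hJ.insert_indep_iff_of_notMem heJ).mpr ⟨he, hJcl⟩
      have hBsub : B ⊆ insert e J := by
        intro x hx
        rcases eq_or_ne x e with rfl | hxe
        · exact Set.mem_insert _ _
        · exact Set.mem_insert_of_mem _ (hBJ ⟨hx, hxe⟩)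
      have heq : B = insert e J := hB.eq_of_subset_indep hins hBsub
      refine subset_antisymm hBJ fun x hx =>
        ⟨?_, fun h => heJ (by rwa [Set.mem_singleton_iff.mp h] at hx)⟩
      rw [heq]
      exact Set.mem_insert_of_mem _ hx
    exact dual_indep_iff_exists'.mpr ⟨hX, B \ {e}, (isBase_restrict_iff hR).mpr hbasis,
      hdj.mono_right diff_subset⟩

lemma IsCircuit.of_restrict' {M : Matroid α} {R C : Set α} (hR : R ⊆ M.E)
    (h : (M ↾ R).IsCircuit' C) : M.IsCircuit' C := by
  obtain ⟨hdep, hmin⟩ := h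
  rw [restrict_dep_iff] at hdep
  exact ⟨⟨hdep.1, hdep.2.trans hR⟩, fun D hD => (restrict_indep_iff.mp (hmin hD)).1⟩

end Matroid


/-- if `(a, b, c, d)` is a 4-fan of `M\e` for an internally
4-connected binary matroid `M` with `|E(M)| ≥ 8`, then `{b, c, d, e}` is a
cocircuit of `M`. -/
theorem statement_16 {α : Type u} (M : Matroid α) (hMbin : M.IsBinary)
    (hMi4 : M.InternallyFourConnected) (hcard : (8 : ℕ∞) ≤ M.E.encard)
    (e : α) (he : e ∈ M.E) (h3c : (M.Del {e}).ThreeConnected)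
    (a b c d : α) (hfan : (M.Del {e}).Is4FanOrdering a b c d) :
    M.IsCocircuit' {b, c, d, e} := by
  obtain ⟨hX4, htri, htriad⟩ := hfan
  obtain ⟨hKcirc, hK3⟩ := htriad
  obtain ⟨hKdep, hKmin⟩ := hKcirc
  have hKground : ({b, c, d} : Set α) ⊆ M.E \ {e} := hKdep.subset_ground
  have htriM : M.IsCircuit' {a, b, c} :=
    Matroid.IsCircuit.of_restrict' Set.diff_subset htri.1
  have htriDep : M.Dep {a, b, c} := htriM.1
  by_cases hP : e ∈ M.closure (M.E \ {e})
  · by_cases hKind : M✶.Indep {b, c, d}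
    · have hTset : ({b, c, d, e} : Set α) = insert e {b, c, d} := by
        ext x
        simp only [Set.mem_insert_iff, Set.mem_singleton_iff]
        tauto
      rw [show ({b, c, d, e} : Set α) = insert e {b, c, d} from hTset]
      refine ⟨⟨?_, Set.insert_subset he (hKground.trans Set.diff_subset)⟩, ?_⟩
      · intro hind
        exact hKdep.not_indep
          ((Matroid.del_dual_indep_iff_of_mem_closure hP hKground).mpr hind)
      · intro S hS
        by_cases heS : e ∈ S
        · have hsub : S \ {e} ⊆ ({b, c, d} : Set α) := by
            intro x hx
            rcases Set.mem_insert_iff.mp (hS.subset hx.1) with h | h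
            · exact absurd h (fun h' => hx.2 (Set.mem_singleton_iff.mpr h'))
            · exact h
          have hne : S \ {e} ≠ ({b, c, d} : Set α) := by
            intro hcon
            apply hS.ne
            rw [← Set.insert_eq_of_mem heS, ← Set.insert_diff_singleton, hcon]
          have hS' : S \ {e} ⊂ ({b, c, d} : Set α) := hsub.ssubset_of_ne hne
          have hindS' := hKmin hS'
          have hres := (Matroid.del_dual_indep_iff_of_mem_closure hP
            (hS'.subset.trans hKground)).mp hindS'
          rwa [Set.insert_diff_singleton, Set.insert_eq_of_mem heS] at hres
        · refine hKind.subset fun x hx => ?_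
          rcases Set.mem_insert_iff.mp (hS.subset hx) with h | h
          · exact absurd (h ▸ hx) heS
          · exact h
    · exact absurd (Matroid.main_contra' hMi4 hcard hX4 htriDep
        ⟨hKind, hKground.trans Set.diff_subset⟩) id
  · have hKni : ¬ M✶.Indep {b, c, d} := fun h =>
      hKdep.not_indep ((Matroid.del_dual_indep_iff_of_not_mem_closure he hP hKground).mpr h)
    exact absurd (Matroid.main_contra' hMi4 hcard hX4 htriDep
      ⟨hKni, hKground.trans Set.diff_subset⟩) id
end
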